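/- Every Birkhoff sequence x has a rotation number ρ(x) = lim_{n→±∞} x_n/n, and satisfies the uniform estimate |x_n - x_0 - ρ(x)·n| ≤ 1 for all n ∈ Z. -/

import Mathlib

open Finset Filter Topology

noncomputable def d1 (f : ℝ → ℝ → ℝ) (ν μ : ℝ) : ℝ := deriv (fun t => f t μ) ν
noncomputable def d2 (f : ℝ → ℝ → ℝ) (ν μ : ℝ) : ℝ := deriv (fun t => f ν t) μ
noncomputable def d11 (f : ℝ → ℝ → ℝ) (ν μ : ℝ) : ℝ := deriv (fun t => d1 f t μ) ν
noncomputable def d12 (f : ℝ → ℝ → ℝ) (ν μ : ℝ) : ℝ := deriv (fun t => d2 f t μ) ν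
noncomputable def d22 (f : ℝ → ℝ → ℝ) (ν μ : ℝ) : ℝ := deriv (fun t => d2 f ν t) μ

/-- The local energy at site `i` of the sequence `z`:  `S_i(z) = ∑_{j=1}^r f_j(z_i, z_{i+j})`. -/
noncomputable def siteE (r : ℕ) (f : ℕ → ℝ → ℝ → ℝ) (z : ℤ → ℝ) (i : ℤ) : ℝ :=
  ∑ j ∈ Finset.Icc 1 r, f j (z i) (z (i + j))

/-- `W_B` for the segment `B = [a,b] ⊂ ℤ`. -/
noncomputable def Wseg (r : ℕ) (f : ℕ → ℝ → ℝ → ℝ) (a b : ℤ) (z : ℤ → ℝ) : ℝ :=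
  ∑ i ∈ Finset.Icc a b, siteE r f z i

/-- A global minimizer: for every segment with interior `[a,b]` and every variation `v`
supported in `[a,b]`, the energy does not decrease. -/
def IsGlobalMin (r : ℕ) (f : ℕ → ℝ → ℝ → ℝ) (x : ℤ → ℝ) : Prop :=
  ∀ a b : ℤ, ∀ v : ℤ → ℝ, (∀ i, v i ≠ 0 → i ∈ Finset.Icc a b) →
    Wseg r f (a - r) b x ≤ Wseg r f (a - r) b (x + v)

/-- The variational monotone recurrence relation `∑_{j=i-r}^{i} ∂_i S_j(x) = 0` at site `i`. -/
def SolvesEL (r : ℕ) (f : ℕ → ℝ → ℝ → ℝ) (x : ℤ → ℝ) (i : ℤ) : Prop :=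
  (∑ j ∈ Finset.Icc 1 r, (d1 (f j) (x i) (x (i + j)) + d2 (f j) (x (i - j)) (x i))) = 0

/-- A local energy of range `r` in the sense of Definition 1.5 of the paper. -/
structure LocalEnergy (r : ℕ) (K lam : ℝ) where
  f : ℕ → ℝ → ℝ → ℝ
  smooth : ∀ j, ContDiff ℝ 2 (fun p : ℝ × ℝ => f j p.1 p.2)
  periodic : ∀ j ν μ, f j (ν + 1) (μ + 1) = f j ν μ
  bound11 : ∀ j ν μ, |d11 (f j) ν μ| ≤ K / r
  bound12 : ∀ j ν μ, |d12 (f j) ν μ| ≤ K / r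
  bound22 : ∀ j ν μ, |d22 (f j) ν μ| ≤ K / r
  coercive : ∀ j ∈ Finset.Icc 1 r, ∀ C : ℝ, ∃ R : ℝ, ∀ ν μ : ℝ, R ≤ |ν - μ| → C ≤ f j ν μ
  twist : ∀ j ∈ Finset.Icc 1 r, ∀ ν μ : ℝ, d12 (f j) ν μ ≤ -lam

/-- `x` and `y` are weakly ordered on the set `s`. -/
def WOrd (x y : ℤ → ℝ) (s : Set ℤ) : Prop :=
  (∀ i ∈ s, x i ≤ y i) ∨ (∀ i ∈ s, y i ≤ x i)

/-- `D` is an interval outside of which (on both components of the complement)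
`x` and `y` are weakly ordered. -/
def CrossProp (x y : ℤ → ℝ) (D : Set ℤ) : Prop :=
  D.OrdConnected ∧ WOrd x y {i | ∀ j ∈ D, i < j} ∧ WOrd x y {i | ∀ j ∈ D, j < i}

/-- The domain of crossing of `x` and `y`: the minimal interval `D` such that `x` and `y`
are weakly ordered on the connected components of its complement. -/
def IsCrossingDomain (x y : ℤ → ℝ) (D : Set ℤ) : Prop :=
  CrossProp x y D ∧ ∀ D' : Set ℤ, CrossProp x y D' → D ⊆ D'

/-- The translation `(τ_{k,l} x)_i = x_{i-k} + l`. -/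
def transl (k l : ℤ) (x : ℤ → ℝ) : ℤ → ℝ := fun i => x (i - k) + l

/-- The Birkhoff property. -/
def Birkhoff (x : ℤ → ℝ) : Prop :=
  ∀ k l : ℤ, (∀ i, transl k l x i ≤ x i) ∨ (∀ i, x i ≤ transl k l x i)

lemma birk_upper (x : ℤ → ℝ) (hx : Birkhoff x) (k i : ℤ) :
    x i - x (i - k) ≤ x k - x 0 + 1 := by
  rcases hx k (⌊x k - x 0⌋ + 1) with h | h
  · have hk := h k
    simp only [transl, sub_self] at hk
    have h2 : x k - x 0 < (⌊x k - x 0⌋ : ℝ) + 1 := Int.lt_floor_add_one _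
    push_cast at hk
    linarith
  · have hi := h i
    simp only [transl] at hi
    have h2 : (⌊x k - x 0⌋ : ℝ) ≤ x k - x 0 := Int.floor_le _
    push_cast at hi
    linarith

lemma birk_lower (x : ℤ → ℝ) (hx : Birkhoff x) (k i : ℤ) :
    x k - x 0 - 1 ≤ x i - x (i - k) := by
  rcases hx k (⌈x k - x 0⌉ - 1) with h | h
  · have hi := h i
    simp only [transl] at hi
    have h2 : x k - x 0 ≤ (⌈x k - x 0⌉ : ℝ) := Int.le_ceil _
    push_cast at hi
    linarith
  · have hk := h k
    simp only [transl, sub_self] at hk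
    have h2 : (⌈x k - x 0⌉ : ℝ) < x k - x 0 + 1 := Int.ceil_lt_add_one _
    push_cast at hk
    linarith

lemma birk_near (x : ℤ → ℝ) (hx : Birkhoff x) (m n : ℤ) :
    |x (m + n) - x m - (x n - x 0)| ≤ 1 := by
  have h1 := birk_upper x hx n (m + n)
  have h2 := birk_lower x hx n (m + n)
  rw [add_sub_cancel_right] at h1 h2
  rw [abs_le]
  constructor <;> linarith

lemma birk_iter (x : ℤ → ℝ) (hx : Birkhoff x) (n : ℤ) (m : ℕ) :
    |x (((m : ℤ) + 1) * n) - x 0 - ((m : ℝ) + 1) * (x n - x 0)| ≤ (m : ℝ) := by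
  induction m with
  | zero => simp
  | succ m IH =>
    have h1 := birk_near x hx (((m : ℤ) + 1) * n) n
    have e : ((m : ℤ) + 1) * n + n = (((m : ℕ) + 1 : ℤ) + 1) * n := by ring
    rw [e] at h1
    rw [abs_le] at h1 IH ⊢
    push_cast at h1 IH ⊢
    constructor <;> nlinarith [h1.1, h1.2, IH.1, IH.2]


lemma birk_main (x : ℤ → ℝ) (hx : Birkhoff x) :
    ∃ ρ : ℝ, Tendsto (fun n : ℤ => x n / (n : ℝ)) atTop (𝓝 ρ) ∧
      Tendsto (fun n : ℤ => x n / (n : ℝ)) atBot (𝓝 ρ) ∧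
      ∀ n : ℤ, |x n - x 0 - ρ * (n : ℝ)| ≤ 1 := by
  set a : ℤ → ℝ := fun n => x n - x 0 with ha
  have hsub : Subadditive (fun p : ℕ => a p + 1) := by
    intro m n
    have h := (abs_le.mp (birk_near x hx m n)).2
    simp only [ha]
    push_cast
    linarith
  have hbdd : BddBelow (Set.range fun p : ℕ => (a p + 1) / p) := by
    refine ⟨min 0 (a 1 - 1), ?_⟩
    rintro _ ⟨p, rfl⟩
    rcases Nat.eq_zero_or_pos p with hp | hp
    · simp [hp]
    · obtain ⟨q, rfl⟩ := Nat.exists_eq_add_of_le hp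
      have h := (abs_le.mp (birk_iter x hx 1 q)).1
      have e : ((q:ℤ)+1)*1 = ((1 + q : ℕ) : ℤ) := by push_cast; ring
      rw [e] at h
      have hq : (0:ℝ) < ((1 + q : ℕ) : ℝ) := by positivity
      rw [le_div_iff₀ hq]
      have h1 : min 0 (a 1 - 1) ≤ a 1 - 1 := min_le_right _ _
      have h0 : min 0 (a 1 - 1) ≤ 0 := min_le_left _ _
      simp only [ha] at h1 h0 ⊢
      push_cast at h ⊢
      nlinarith
  set ρ : ℝ := hsub.lim with hρ
  have hlim : Tendsto (fun p : ℕ => (a p + 1) / p) atTop (𝓝 ρ) := hsub.tendsto_lim hbdd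
  -- limit of a p / p over naturals
  have hnat : Tendsto (fun p : ℕ => a p / p) atTop (𝓝 ρ) := by
    have h0 : Tendsto (fun p : ℕ => (1:ℝ) / p) atTop (𝓝 0) :=
      tendsto_one_div_atTop_nhds_zero_nat
    have := hlim.sub h0
    rw [sub_zero] at this
    refine this.congr fun p => ?_
    rw [← sub_div]
    ring_nf
  -- limit over negative integers
  have hB : Tendsto (fun q : ℕ => (a q + a (-(q:ℤ))) / (q:ℝ)) atTop (𝓝 0) := by
    refine squeeze_zero_norm' ?_ (tendsto_one_div_atTop_nhds_zero_nat)
    filter_upwards [eventually_ge_atTop 1] with q hq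
    have h := birk_near x hx (q:ℤ) (-(q:ℤ))
    have e : (q:ℤ) + -(q:ℤ) = 0 := by ring
    rw [e] at h
    have habs : |a q + a (-(q:ℤ))| ≤ 1 := by
      simp only [ha]
      rw [show x (q:ℤ) - x 0 + (x (-(q:ℤ)) - x 0) =
        -(x 0 - x (q:ℤ) - (x (-(q:ℤ)) - x 0)) by ring, abs_neg]
      exact h
    have hqpos : (0:ℝ) < (q:ℝ) := by exact_mod_cast hq
    rw [Real.norm_eq_abs, abs_div, abs_of_pos hqpos]
    exact div_le_div_of_nonneg_right habs hqpos.le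
  have hneg : Tendsto (fun q : ℕ => a (-(q:ℤ)) / (-(q:ℝ))) atTop (𝓝 ρ) := by
    have := hnat.sub hB
    rw [sub_zero] at this
    refine this.congr fun q => ?_
    rw [div_neg, ← sub_div, ← neg_div]
    congr 1
    ring
  -- the uniform estimate
  have hest : ∀ n : ℤ, |a n - ρ * (n : ℝ)| ≤ 1 := by
    intro n
    rcases eq_or_ne n 0 with rfl | hn
    · simp [ha]
    · have hc : Tendsto (fun m : ℕ => a (((m:ℤ)+1)*n) / (((m:ℝ)+1)*(n:ℝ))) atTop (𝓝 ρ) := by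
        rcases hn.lt_or_gt with hneg' | hpos
        · -- n < 0
          set p : ℕ := (-n).toNat with hp
          have hpz : (p:ℤ) = -n := Int.toNat_of_nonneg (by omega)
          have hp1 : 1 ≤ p := by omega
          have hcomp : Tendsto (fun m : ℕ => (m+1)*p) atTop atTop := by
            apply tendsto_atTop_mono (fun m => ?_) tendsto_id
            calc m ≤ m + 1 := Nat.le_succ m
            _ = (m+1)*1 := by ring
            _ ≤ (m+1)*p := Nat.mul_le_mul_left _ hp1
          have := hneg.comp hcomp
          refine this.congr fun m => ?_
          simp only [Function.comp]
          have e1 : (-(((m+1)*p : ℕ) : ℤ)) = ((m:ℤ)+1)*n := by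
            push_cast [hpz]
            ring
          have e2 : (-(((m+1)*p : ℕ) : ℝ)) = ((m:ℝ)+1)*(n:ℝ) := by
            have hpr : (p:ℝ) = -(n:ℝ) := by exact_mod_cast hpz
            push_cast [hpr]
            ring
          rw [e1, e2]
        · -- n > 0
          set p : ℕ := n.toNat with hp
          have hpz : (p:ℤ) = n := Int.toNat_of_nonneg (by omega)
          have hp1 : 1 ≤ p := by omega
          have hcomp : Tendsto (fun m : ℕ => (m+1)*p) atTop atTop := by
            apply tendsto_atTop_mono (fun m => ?_) tendsto_id
            calc m ≤ m + 1 := Nat.le_succ m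
            _ = (m+1)*1 := by ring
            _ ≤ (m+1)*p := Nat.mul_le_mul_left _ hp1
          have := hnat.comp hcomp
          refine this.congr fun m => ?_
          simp only [Function.comp]
          have e1 : ((((m+1)*p : ℕ)) : ℤ) = ((m:ℤ)+1)*n := by
            push_cast [hpz]
            ring
          have e2 : ((((m+1)*p : ℕ)) : ℝ) = ((m:ℝ)+1)*(n:ℝ) := by
            have hpr : (p:ℝ) = (n:ℝ) := by exact_mod_cast hpz
            push_cast [hpr]
            ring
          rw [e1, e2]
      have hn' : (n:ℝ) ≠ 0 := Int.cast_ne_zero.mpr hn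
      have hc' : Tendsto (fun m : ℕ => a (((m:ℤ)+1)*n) / ((m:ℝ)+1)) atTop (𝓝 (ρ * n)) := by
        have := hc.mul_const (n:ℝ)
        refine this.congr fun m => ?_
        have hm : ((m:ℝ)+1) ≠ 0 := by positivity
        field_simp
      have hlimabs : Tendsto (fun m : ℕ => |a (((m:ℤ)+1)*n) / ((m:ℝ)+1) - a n|) atTop
          (𝓝 (|ρ * n - a n|)) := ((hc'.sub_const (a n)).abs)
      have hbound : ∀ m : ℕ, |a (((m:ℤ)+1)*n) / ((m:ℝ)+1) - a n| ≤ 1 := by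
        intro m
        have h := birk_iter x hx n m
        have hm : (0:ℝ) < (m:ℝ)+1 := by positivity
        rw [div_sub' (ne_of_gt hm), abs_div, abs_of_pos hm, div_le_one hm]
        calc |a (((m:ℤ)+1)*n) - ((m:ℝ)+1) * a n| ≤ (m:ℝ) := by
              simpa only [ha] using h
        _ ≤ (m:ℝ) + 1 := by linarith
      have : |ρ * n - a n| ≤ 1 :=
        le_of_tendsto hlimabs (Eventually.of_forall hbound)
      rw [abs_sub_comm] at this
      exact this
  refine ⟨ρ, ?_, ?_, fun n => by simpa [ha] using hest n⟩
  · -- atTop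
    have hsq : Tendsto (fun n : ℤ => x n / (n:ℝ) - ρ) atTop (𝓝 0) := by
      refine squeeze_zero_norm' (a := fun n : ℤ => (|x 0| + 1) / (n:ℝ)) ?_
        (tendsto_const_nhds.div_atTop tendsto_intCast_atTop_atTop)
      filter_upwards [eventually_ge_atTop 1] with n hn
      have hnpos : (0:ℝ) < (n:ℝ) := by exact_mod_cast hn
      have hn0 : (n:ℝ) ≠ 0 := ne_of_gt hnpos
      have h := hest n
      have e : x n / (n:ℝ) - ρ = (x n - ρ * n)/(n:ℝ) := by field_simp
      rw [Real.norm_eq_abs, e, abs_div, abs_of_pos hnpos]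
      refine div_le_div_of_nonneg_right ?_ hnpos.le
      calc |x n - ρ * n| = |(x n - x 0 - ρ * n) + x 0| := by ring_nf
      _ ≤ |x n - x 0 - ρ * n| + |x 0| := abs_add_le _ _
      _ ≤ |x 0| + 1 := by simp only [ha] at h; linarith
    simpa using hsq.add_const ρ
  · -- atBot
    have hsq : Tendsto (fun n : ℤ => x n / (n:ℝ) - ρ) atBot (𝓝 0) := by
      refine squeeze_zero_norm'
        (a := fun n : ℤ => (|x 0| + 1) / (-(n:ℝ))) ?_
        (tendsto_const_nhds.div_atTop
          (tendsto_neg_atBot_atTop.comp (tendsto_intCast_atBot_iff.mpr tendsto_id)))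
      filter_upwards [eventually_le_atBot (-1 : ℤ)] with n hn
      have hnneg : (n:ℝ) < 0 := by exact_mod_cast Int.lt_of_le_sub_one (by omega)
      have hn0 : (n:ℝ) ≠ 0 := ne_of_lt hnneg
      have h := hest n
      have e : x n / (n:ℝ) - ρ = (x n - ρ * n)/(n:ℝ) := by field_simp
      rw [Real.norm_eq_abs, e, abs_div, abs_of_neg hnneg]
      refine div_le_div_of_nonneg_right ?_ (by linarith : (0:ℝ) ≤ -(n:ℝ))
      calc |x n - ρ * n| = |(x n - x 0 - ρ * n) + x 0| := by ring_nf
      _ ≤ |x n - x 0 - ρ * n| + |x 0| := abs_add_le _ _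
      _ ≤ |x 0| + 1 := by simp only [ha] at h; linarith
    simpa using hsq.add_const ρ

/-- Every Birkhoff sequence has a rotation number `ρ = lim_{n→±∞} x_n/n` and satisfies
the uniform estimate `|x_n - x_0 - ρ n| ≤ 1` for all `n`. -/
theorem stmt14 (x : ℤ → ℝ) (hx : Birkhoff x) :
    ∃ ρ : ℝ, Tendsto (fun n : ℤ => x n / (n : ℝ)) atTop (𝓝 ρ) ∧
      Tendsto (fun n : ℤ => x n / (n : ℝ)) atBot (𝓝 ρ) ∧
      ∀ n : ℤ, |x n - x 0 - ρ * (n : ℝ)| ≤ 1 := by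
  exact birk_main x hx
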